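/- For every positive integer a and nonnegative integer n, the number of a-parking functions of length n is a·(a+n)^{n-1}. -/

import Mathlib

/-- The weakly increasing sorted version of a vector of naturals. -/
def sortPF {n : ℕ} (p : Fin n → ℕ) : List ℕ :=
  Multiset.sort (↑(List.ofFn p)) (· ≤ ·)

/-- `p` is an `a`-parking function of length `n`: all entries are positive and the
`i`-th entry (0-based) of the sorted version is at most `a + i` (i.e. `a + i - 1` 1-based). -/
def IsAPF (a : ℕ) {n : ℕ} (p : Fin n → ℕ) : Prop :=
  (∀ i, 1 ≤ p i) ∧ ∀ i : Fin n, (sortPF p).getD i 0 ≤ a + (i : ℕ)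

/-- `p` is an ordinary parking function of length `n`. -/
def IsPF {n : ℕ} (p : Fin n → ℕ) : Prop :=
  (∀ i, 1 ≤ p i ∧ p i ≤ n) ∧ ∀ i : Fin n, (sortPF p).getD i 0 ≤ (i : ℕ) + 1

open Finset
open scoped Classical

lemma countP_ofFn {n : ℕ} (p : Fin n → ℕ) (q : ℕ → Prop) [DecidablePred q] :
    Multiset.countP q ↑(List.ofFn p) = #(univ.filter fun i => q (p i)) := by
  simp [Fin.univ_def, Finset.card, Finset.filter, List.ofFn_eq_map,
    Multiset.countP_eq_card_filter, List.countP_map, List.countP_eq_length_filter,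
    List.filter_map, Function.comp_def]

lemma sorted_getD_le_iff {l : List ℕ} (hl : l.Pairwise (· ≤ ·)) {k : ℕ} (hk : k < l.length)
    (v : ℕ) :
    l.getD k 0 ≤ v ↔ k + 1 ≤ #(univ.filter fun i : Fin l.length => l.get i ≤ v) := by
  have hget : l.getD k 0 = l.get ⟨k, hk⟩ := by
    simp [List.getD_eq_getElem?_getD, List.getElem?_eq_getElem hk]
  rw [hget]
  constructor
  · intro h
    have hsub : Iic (⟨k, hk⟩ : Fin l.length) ⊆ univ.filter fun i => l.get i ≤ v := by
      intro i hi
      simp only [mem_Iic] at hi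
      simp only [mem_filter, mem_univ, true_and]
      exact le_trans (hl.rel_get_of_le hi) h
    simpa [Fin.card_Iic] using card_le_card hsub
  · intro h
    by_contra hv
    push_neg at hv
    have hsub : (univ.filter fun i : Fin l.length => l.get i ≤ v) ⊆ Iio ⟨k, hk⟩ := by
      intro i hi
      simp only [mem_filter, mem_univ, true_and] at hi
      simp only [mem_Iio]
      by_contra hik
      push_neg at hik
      exact absurd (le_trans (hl.rel_get_of_le hik) hi) (not_le.mpr hv)
    have := card_le_card hsub
    simp only [Fin.card_Iio] at this
    omega

lemma length_sortPF {n : ℕ} (p : Fin n → ℕ) : (sortPF p).length = n := by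
  have := congrArg Multiset.card (Multiset.sort_eq (↑(List.ofFn p) : Multiset ℕ) (· ≤ ·))
  simpa [sortPF] using this

lemma card_get_sortPF {n : ℕ} (p : Fin n → ℕ) (v : ℕ) :
    #(univ.filter fun i : Fin (sortPF p).length => (sortPF p).get i ≤ v)
      = #(univ.filter fun i : Fin n => p i ≤ v) := by
  rw [← countP_ofFn (fun i => (sortPF p).get i) (fun x => x ≤ v),
    ← countP_ofFn p (fun x => x ≤ v), List.ofFn_get, sortPF, Multiset.sort_eq]

lemma isAPF_iff {a n : ℕ} (p : Fin n → ℕ) :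
    IsAPF a p ↔ (∀ i, 1 ≤ p i) ∧
      ∀ j, j < a + n → j + 1 ≤ #(univ.filter fun i => p i ≤ j) + a := by
  have hlen := length_sortPF p
  have hsorted : (sortPF p).Pairwise (· ≤ ·) := Multiset.pairwise_sort _ _
  constructor
  · rintro ⟨h1, h2⟩
    refine ⟨h1, fun j hj => ?_⟩
    rcases lt_or_ge j a with hja | hja
    · omega
    · have hk : j - a < n := by omega
      have := h2 ⟨j - a, hk⟩
      simp only at this
      have heq : a + (j - a) = j := by omega
      rw [heq] at this
      have hk' : j - a < (sortPF p).length := by omega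
      have := (sorted_getD_le_iff hsorted hk' j).mp this
      rw [card_get_sortPF] at this
      omega
  · rintro ⟨h1, h2⟩
    refine ⟨h1, fun i => ?_⟩
    have hj : a + (i : ℕ) < a + n := by omega
    have := h2 (a + i) hj
    have hk' : (i : ℕ) < (sortPF p).length := by omega
    rw [sorted_getD_le_iff hsorted hk', card_get_sortPF]
    omega

lemma card_goodShifts (m a : ℕ) (ha : 0 < a) (hm : 0 < m) (W : ℕ → ℤ)
    (hW0 : W 0 = 0) (hstep : ∀ j, W j - 1 ≤ W (j + 1)) (hper : ∀ j, W (j + m) = W j - a) :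
    #((range m).filter fun c => ∀ j < m, W (c + 1 + m) < W (c + 1 + j)) = a := by
  have hne : (range (m + 1)).Nonempty := ⟨0, by simp⟩
  set μ := (range (m + 1)).inf' hne W with hμ
  have hrec : ∀ c < m, (∀ j < m, W (c + 1 + m) < W (c + 1 + j)) →
      ∀ k < c + 1 + m, W (c + 1 + m) < W k := by
    intro c hc hg k hk
    rcases le_or_gt (c + 1) k with h | h
    · have := hg (k - (c + 1)) (by omega)
      rwa [show c + 1 + (k - (c + 1)) = k by omega] at this
    · have := hg (k + m - (c + 1)) (by omega)
      rw [show c + 1 + (k + m - (c + 1)) = k + m by omega] at this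
      have hk' := hper k
      omega
  have hcard : #(Finset.Ico (μ - a) μ) = a := by
    rw [Int.card_Ico]
    omega
  rw [← hcard]
  apply Finset.card_bij (fun c _ => W (c + 1 + m))
  · intro c hc
    simp only [mem_filter, mem_range] at hc
    obtain ⟨hcm, hg⟩ := hc
    rw [Finset.mem_Ico]
    constructor
    · have h1 : μ ≤ W (c + 1) := Finset.inf'_le W (by simp; omega)
      have h2 := hper (c + 1)
      omega
    · rw [Finset.lt_inf'_iff]
      intro k hk
      simp only [mem_range] at hk
      exact hrec c hcm hg k (by omega)
  · intro c1 hc1 c2 hc2 heq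
    simp only [mem_filter, mem_range] at hc1 hc2
    by_contra hne'
    rcases lt_trichotomy c1 c2 with h | h | h
    · have := hrec c2 hc2.1 hc2.2 (c1 + 1 + m) (by omega)
      omega
    · exact hne' h
    · have := hrec c1 hc1.1 hc1.2 (c2 + 1 + m) (by omega)
      omega
  · intro v hv
    rw [Finset.mem_Ico] at hv
    obtain ⟨k₀, hk₀mem, hk₀⟩ := Finset.exists_mem_eq_inf' hne W
    simp only [mem_range] at hk₀mem
    have hex : ∃ q, W q ≤ v := ⟨k₀ + m, by rw [hper]; omega⟩
    set q := Nat.find hex with hqdef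
    have hq : W q ≤ v := Nat.find_spec hex
    have hmin : ∀ k, k < q → v < W k := fun k hk => by
      have := Nat.find_min hex hk
      omega
    have hμ0 : μ ≤ W 0 := Finset.inf'_le W (by simp)
    have hq0 : q ≠ 0 := by
      intro h
      rw [h, hW0] at hq
      omega
    have hWq : W q = v := by
      have h1 := hstep (q - 1)
      rw [show q - 1 + 1 = q by omega] at h1
      have h2 := hmin (q - 1) (by omega)
      omega
    have hqm : m < q := by
      by_contra h
      push_neg at h
      have : μ ≤ W q := Finset.inf'_le W (by simp; omega)
      omega
    have hq2 : q ≤ k₀ + m := Nat.find_min' hex (by rw [hper]; omega)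
    refine ⟨q - m - 1, ?_, ?_⟩
    · simp only [mem_filter, mem_range]
      refine ⟨by omega, fun j hj => ?_⟩
      rw [show q - m - 1 + 1 + m = q by omega, hWq]
      exact hmin (q - m - 1 + 1 + j) (by omega)
    · rw [show q - m - 1 + 1 + m = q by omega, hWq]

section ZModPart
variable {m : ℕ} [NeZero m]

/-- Representative of `x : ZMod m` in `[1, m]`. -/
def val' (x : ZMod m) : ℕ := if x = 0 then m else x.val

lemma one_le_val' (x : ZMod m) : 1 ≤ val' x := by
  unfold val'
  split
  · exact (NeZero.pos m)
  · rw [Nat.one_le_iff_ne_zero]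
    exact fun h => (by assumption : ¬ x = 0) ((ZMod.val_eq_zero x).mp h)

lemma val'_le_iff {x : ZMod m} {j : ℕ} (hj : j < m) : val' x ≤ j ↔ x ≠ 0 ∧ x.val ≤ j := by
  by_cases h : x = 0
  · simp [val', h]
    omega
  · simp [val', h]

lemma card_shift {n : ℕ} (b : Fin n → ZMod m) (c : ZMod m) {j : ℕ} (hj : j < m) :
    #(univ.filter fun i => val' (b i - c) ≤ j)
      = ∑ t ∈ Finset.Ico (c.val + 1) (c.val + 1 + j),
          #(univ.filter fun i => b i = (t : ZMod m)) := by
  have H : ∀ i ∈ univ.filter fun i => val' (b i - c) ≤ j,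
      (fun i => c.val + (b i - c).val) i ∈ Finset.Ico (c.val + 1) (c.val + 1 + j) := by
    intro i hi
    simp only [mem_filter, mem_univ, true_and] at hi
    rw [val'_le_iff hj] at hi
    have := ZMod.val_pos.mpr hi.1
    rw [Finset.mem_Ico]
    show c.val + 1 ≤ c.val + (b i - c).val ∧ c.val + (b i - c).val < c.val + 1 + j
    omega
  rw [Finset.card_eq_sum_card_fiberwise H]
  apply Finset.sum_congr rfl
  intro t ht
  rw [Finset.mem_Ico] at ht
  rw [Finset.filter_filter]
  congr 1
  apply Finset.filter_congr
  intro i _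
  constructor
  · rintro ⟨h1, h2⟩
    rw [val'_le_iff hj] at h1
    subst h2
    rw [Nat.cast_add, ZMod.natCast_zmod_val, ZMod.natCast_zmod_val]
    ring
  · intro hbi
    set d := t - c.val with hd
    have hd1 : 1 ≤ d := by omega
    have hdj : d ≤ j := by omega
    have hx : b i - c = ((d : ℕ) : ZMod m) := by
      rw [hbi]
      have ht' : (t : ZMod m) = ((c.val + d : ℕ) : ZMod m) := by
        congr 1
        omega
      rw [ht']
      push_cast [ZMod.natCast_zmod_val]
      ring
    have hval : (b i - c).val = d := by
      rw [hx, ZMod.val_natCast_of_lt (by omega)]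
    have hne : b i - c ≠ 0 := by
      intro h
      rw [h, ZMod.val_zero] at hval
      omega
    refine ⟨(val'_le_iff hj).mpr ⟨hne, by omega⟩, by omega⟩

lemma sum_period {n : ℕ} (b : Fin n → ZMod m) (j : ℕ) :
    ∑ t ∈ Finset.Ico j (j + m), #(univ.filter fun i => b i = (t : ZMod m)) = n := by
  have h1 : ∑ x : ZMod m, #(univ.filter fun i => b i = x) = n := by
    have := Finset.card_eq_sum_card_fiberwise
      (f := b) (s := univ) (t := univ) (fun i _ => mem_univ (b i))
    simpa using this.symm
  refine Eq.trans ?_ h1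
  apply Finset.sum_nbij' (i := fun t => ((t : ℕ) : ZMod m))
    (j := fun x => j + (x - (j : ZMod m)).val)
  · intro t ht
    exact mem_univ _
  · intro x _
    rw [Finset.mem_Ico]
    have := ZMod.val_lt (x - (j : ZMod m))
    omega
  · intro t ht
    rw [Finset.mem_Ico] at ht
    have h2 : ((t : ZMod m) - (j : ZMod m)) = ((t - j : ℕ) : ZMod m) := by
      rw [Nat.cast_sub ht.1]
    rw [h2, ZMod.val_natCast_of_lt (by omega)]
    omega
  · intro x _
    push_cast [ZMod.natCast_zmod_val]
    ring
  · intro t _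
    rfl

end ZModPart

lemma cycle_count {n m a : ℕ} [NeZero m] (ha : 0 < a) (hm : m = a + n)
    (b : Fin n → ZMod m) :
    #(univ.filter fun c : ZMod m => IsAPF a fun i => val' (b i - c)) = a := by
  have hmpos : 0 < m := by omega
  set F : ℕ → ℕ := fun t => #(univ.filter fun i => b i = ((t : ℕ) : ZMod m)) with hF
  set W : ℕ → ℤ := fun j => ∑ t ∈ range j, ((F t : ℤ) - 1) with hW
  have hW0 : W 0 = 0 := by simp [hW]
  have hstep : ∀ j, W j - 1 ≤ W (j + 1) := by
    intro j
    have h2 : W (j + 1) = W j + ((F j : ℤ) - 1) := Finset.sum_range_succ _ j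
    have h3 : (0 : ℤ) ≤ (F j : ℤ) := Int.natCast_nonneg _
    omega
  have hsplit : ∀ j k : ℕ, W (j + k) = W j + ∑ t ∈ Finset.Ico j (j + k), ((F t : ℤ) - 1) := by
    intro j k
    rw [hW]
    simp only
    rw [Finset.range_eq_Ico, Finset.range_eq_Ico]
    exact (Finset.sum_Ico_consecutive (fun t => ((F t : ℤ) - 1)) (Nat.zero_le j) (Nat.le_add_right j k)).symm
  have hsum : ∀ j, ∑ t ∈ Finset.Ico j (j + m), ((F t : ℤ)) = (n : ℤ) := by
    intro j
    exact_mod_cast congrArg (Nat.cast : ℕ → ℤ) (sum_period b j)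
  have hper : ∀ j, W (j + m) = W j - a := by
    intro j
    rw [hsplit j m, Finset.sum_sub_distrib, hsum j, Finset.sum_const, Nat.card_Ico]
    have h3 : j + m - j = m := by omega
    rw [h3]
    simp only [nsmul_eq_mul, mul_one]
    have h5 : (m : ℤ) = (a : ℤ) + n := by exact_mod_cast congrArg (Nat.cast : ℕ → ℤ) hm
    rw [h5]
    ring
  have hkey : ∀ (c : ZMod m) (j : ℕ), j < m →
      (#(univ.filter fun i => val' (b i - c) ≤ j) : ℤ)
        = W (c.val + 1 + j) - W (c.val + 1) + j := by
    intro c j hj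
    rw [card_shift b c hj]
    have h4 := hsplit (c.val + 1) j
    have h5 : ∑ t ∈ Finset.Ico (c.val + 1) (c.val + 1 + j), ((F t : ℤ) - 1)
        = (∑ t ∈ Finset.Ico (c.val + 1) (c.val + 1 + j), (F t : ℤ)) - j := by
      rw [Finset.sum_sub_distrib, Finset.sum_const, Nat.card_Ico]
      have : c.val + 1 + j - (c.val + 1) = j := by omega
      rw [this]
      simp [nsmul_eq_mul]
    have h6 : ((∑ t ∈ Finset.Ico (c.val + 1) (c.val + 1 + j), F t : ℕ) : ℤ)
        = ∑ t ∈ Finset.Ico (c.val + 1) (c.val + 1 + j), (F t : ℤ) := by push_cast; rfl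
    rw [h6]
    omega
  have hgood : ∀ c : ZMod m, (IsAPF a fun i => val' (b i - c)) ↔
      ∀ j < m, W (c.val + 1 + m) < W (c.val + 1 + j) := by
    intro c
    rw [isAPF_iff]
    have h1 : ∀ i, 1 ≤ val' (b i - c) := fun i => one_le_val' _
    have hperc := hper (c.val + 1)
    constructor
    · rintro ⟨-, h2⟩ j hj
      have h3 := h2 j (by omega)
      have h4 := hkey c j hj
      have h3' : (j : ℤ) + 1 ≤ (#(univ.filter fun i => val' (b i - c) ≤ j) : ℤ) + a := by
        exact_mod_cast h3
      omega
    · intro h2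
      refine ⟨h1, fun j hj => ?_⟩
      have h3 := h2 j (by omega)
      have h4 := hkey c j (by omega)
      have goal' : (j : ℤ) + 1 ≤ (#(univ.filter fun i => val' (b i - c) ≤ j) : ℤ) + a := by
        omega
      exact_mod_cast goal'
  have hmain : #(univ.filter fun c : ZMod m => IsAPF a fun i => val' (b i - c))
      = #((range m).filter fun c => ∀ j < m, W (c + 1 + m) < W (c + 1 + j)) := by
    apply Finset.card_bij (fun c _ => ZMod.val c)
    · intro c hc
      simp only [mem_filter, mem_univ, true_and] at hc
      simp only [mem_filter, mem_range]
      exact ⟨ZMod.val_lt c, (hgood c).mp hc⟩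
    · intro c1 _ c2 _ heq
      rw [← ZMod.natCast_zmod_val c1, ← ZMod.natCast_zmod_val c2, heq]
    · intro c' hc'
      simp only [mem_filter, mem_range] at hc'
      refine ⟨((c' : ℕ) : ZMod m), ?_, ZMod.val_natCast_of_lt hc'.1⟩
      simp only [mem_filter, mem_univ, true_and]
      rw [hgood, ZMod.val_natCast_of_lt hc'.1]
      exact hc'.2
  rw [hmain]
  exact card_goodShifts m a ha hmpos W hW0 hstep hper

lemma apf_bound {a n : ℕ} (ha : 0 < a) {p : Fin n → ℕ} (hp : IsAPF a p) (i : Fin n) :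
    p i < a + n := by
  have h := (isAPF_iff p).mp hp
  have h2 := h.2 (a + n - 1) (by omega)
  have hle : #(univ.filter fun i => p i ≤ a + n - 1) ≤ n := by
    have := Finset.card_filter_le (univ : Finset (Fin n)) (fun i => p i ≤ a + n - 1)
    simpa using this
  have heq : (univ.filter fun i => p i ≤ a + n - 1) = univ := by
    apply Finset.eq_univ_of_card
    rw [Fintype.card_fin]
    omega
  have : i ∈ univ.filter fun i => p i ≤ a + n - 1 := heq.symm ▸ mem_univ i
  simp only [mem_filter, mem_univ, true_and] at this
  omega

lemma shift_filter_card {n m : ℕ} [NeZero m] (a : ℕ) (c : ZMod m) :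
    #(univ.filter fun b : Fin n → ZMod m => IsAPF a fun i => val' (b i - c))
      = #(univ.filter fun b : Fin n → ZMod m => IsAPF a fun i => val' (b i)) := by
  apply Finset.card_bij' (fun b _ => fun i => b i - c) (fun b _ => fun i => b i + c)
  · intro b hb
    simp only [mem_filter, mem_univ, true_and] at hb ⊢
    exact hb
  · intro b hb
    simp only [mem_filter, mem_univ, true_and] at hb ⊢
    have h : (fun i => val' ((fun i => b i + c) i - c)) = fun i => val' (b i) := by
      funext i
      simp only
      congr 1
      ring
    exact h ▸ hb
  · intro b _
    funext i
    ring
  · intro b _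
    funext i
    ring

lemma count_eq {n m a : ℕ} [NeZero m] (ha : 0 < a) (hm : m = a + n) :
    m * #(univ.filter fun b : Fin n → ZMod m => IsAPF a fun i => val' (b i))
      = a * m ^ n := by
  have h1 : ∑ b : Fin n → ZMod m,
      #(univ.filter fun c : ZMod m => IsAPF a fun i => val' (b i - c)) = m ^ n * a := by
    rw [Finset.sum_congr rfl (fun b _ => cycle_count ha hm b), Finset.sum_const,
      Finset.card_univ, smul_eq_mul]
    congr 1
    rw [Fintype.card_fun, ZMod.card, Fintype.card_fin]
  have h2 : ∑ b : Fin n → ZMod m,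
        #(univ.filter fun c : ZMod m => IsAPF a fun i => val' (b i - c))
      = ∑ c : ZMod m,
        #(univ.filter fun b : Fin n → ZMod m => IsAPF a fun i => val' (b i - c)) := by
    simp only [Finset.card_filter]
    exact Finset.sum_comm
  have h3 : ∑ c : ZMod m,
        #(univ.filter fun b : Fin n → ZMod m => IsAPF a fun i => val' (b i - c))
      = m * #(univ.filter fun b : Fin n → ZMod m => IsAPF a fun i => val' (b i)) := by
    rw [Finset.sum_congr rfl (fun c _ => shift_filter_card a c), Finset.sum_const,
      Finset.card_univ, ZMod.card, smul_eq_mul]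
  rw [← h3, ← h2, h1, mul_comm]

lemma nat_card_eq {n m a : ℕ} [NeZero m] (ha : 0 < a) (hm : m = a + n) :
    Nat.card {p : Fin n → ℕ // IsAPF a p}
      = #(univ.filter fun b : Fin n → ZMod m => IsAPF a fun i => val' (b i)) := by
  have hfix : ∀ (p : Fin n → ℕ), IsAPF a p → (fun i => val' ((p i : ZMod m))) = p := by
    intro p hp
    funext i
    have hlt : p i < m := hm ▸ apf_bound ha hp i
    have h1 : ((p i : ZMod m)).val = p i := ZMod.val_natCast_of_lt hlt
    have hpos := hp.1 i
    unfold val'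
    split
    · next h =>
      rw [h, ZMod.val_zero] at h1
      omega
    · exact h1
  have e : {p : Fin n → ℕ // IsAPF a p} ≃
      {b : Fin n → ZMod m // IsAPF a fun i => val' (b i)} :=
    { toFun := fun x => ⟨fun i => ((x.1 i : ℕ) : ZMod m), by
        rw [show (fun i => val' ((x.1 i : ZMod m))) = x.1 from hfix x.1 x.2]
        exact x.2⟩
      invFun := fun x => ⟨fun i => val' (x.1 i), x.2⟩
      left_inv := fun x => by
        apply Subtype.ext
        exact hfix x.1 x.2
      right_inv := fun x => by
        apply Subtype.ext
        funext i
        show ((val' (x.1 i) : ℕ) : ZMod m) = x.1 i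
        unfold val'
        split
        · next h => rw [h, ZMod.natCast_self]
        · exact ZMod.natCast_zmod_val _ }
  rw [Nat.card_congr e, Nat.card_eq_fintype_card, Fintype.card_subtype]

/-- For every positive integer `a` and nonnegative integer `n`, the number of
`a`-parking functions of length `n` is `a (a+n)^(n-1)` (with an integer exponent,
so that for `n = 0` the formula gives `a · a⁻¹ = 1`). -/
theorem num_a_parking_functions (a n : ℕ) (ha : 1 ≤ a) :
    (Nat.card {p : Fin n → ℕ // IsAPF a p} : ℚ) =
      (a : ℚ) * ((a : ℚ) + (n : ℚ)) ^ ((n : ℤ) - 1) := by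
  have haQ : (a : ℚ) ≠ 0 := by positivity
  cases n with
  | zero =>
    haveI : Unique {p : Fin 0 → ℕ // IsAPF a p} :=
      { default := ⟨fun i => i.elim0, fun i => i.elim0, fun i => i.elim0⟩
        uniq := by
          rintro ⟨p, hp⟩
          apply Subtype.ext
          funext i
          exact i.elim0 }
    rw [Nat.card_unique]
    norm_num
    exact (mul_inv_cancel₀ haQ).symm
  | succ n' =>
    haveI : NeZero (a + (n' + 1)) := ⟨by omega⟩
    have hG := @count_eq (n' + 1) (a + (n' + 1)) a _ ha rfl
    have hGQ := congrArg (Nat.cast : ℕ → ℚ) hG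
    push_cast at hGQ
    rw [nat_card_eq (m := a + (n' + 1)) ha rfl]
    have hexp : ((n' + 1 : ℕ) : ℤ) - 1 = (n' : ℤ) := by push_cast; ring
    rw [hexp, zpow_natCast]
    push_cast
    have hM : (0:ℚ) < (a:ℚ) + ((n':ℚ) + 1) := by positivity
    apply mul_left_cancel₀ hM.ne'
    rw [hGQ]
    ring
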